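/- Let F be a CNF with a Resolution refutation D_1,…,D_S of width w, and for 0 ≤ t ≤ S set E'_t = ⋁_{i=1}^{t} ¬D_i (a w-DNF whose terms are the negations of the first t clauses of the refutation). Then for every 0 ≤ t ≤ S−1 there exists a w-DNF E_t whose set of terms is a subset of the set of terms of E'_t, together with a tree-like Res(w) derivation of E_t from F with at most 5(S−t) nodes. In particular, taking t = 0 yields a tree-like Res(w) refutation of F. -/

import Mathlib

/-- Propositional variables. -/
abbrev PVar := ℕ

/-- A literal: a variable together with a sign (`true` = the positive literal `x`,
`false` = the negated literal `¬x`). -/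
abbrev PLit := PVar × Bool

/-- Negation of a literal. -/
def PLit.neg (m : PLit) : PLit := (m.1, !m.2)

/-- A clause: a finite set of literals, read as their disjunction.
Its width is its cardinality. -/
abbrev PClause := Finset PLit

/-- A CNF formula: a finite set of clauses, read as their conjunction. -/
abbrev PCnf := Finset PClause

/-- A term: a finite set of literals, read as their conjunction. -/
abbrev PTerm := Finset PLit

/-- A DNF: a finite set of terms, read as their disjunction. -/
abbrev PDnf := Finset PTerm

/-- `D` is an `l`-DNF: every term of `D` has at most `l` literals. -/
def IsLDnf (l : ℕ) (D : PDnf) : Prop := ∀ T ∈ D, T.card ≤ l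

/-- The negation `¬C` of a clause `C = m₁ ∨ … ∨ m_t`, i.e. the term `¬m₁ ∧ … ∧ ¬m_t`. -/
def PClause.negTerm (C : PClause) : PTerm := C.image PLit.neg

/-- A clause viewed as a DNF consisting of singleton terms. -/
def PClause.toDnf (C : PClause) : PDnf := C.image (fun m => ({m} : PTerm))

/-- The disjunction `¬l₁ ∨ … ∨ ¬l_s` of the negations of the literals of the
term `T = l₁ ∧ … ∧ l_s`, as a DNF of singleton terms. -/
def PTerm.negLits (T : PTerm) : PDnf := T.image (fun m => ({m.neg} : PTerm))

/-- Binary proof trees whose nodes are labelled by DNFs. -/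
inductive PTree : Type where
  | leaf (D : PDnf) : PTree
  | node (D : PDnf) (t₁ t₂ : PTree) : PTree

namespace PTree

/-- The label at the root of the tree. -/
def concl : PTree → PDnf
  | .leaf D => D
  | .node D _ _ => D

/-- The number of leaves of the tree. -/
def leaves : PTree → ℕ
  | .leaf _ => 1
  | .node _ t₁ t₂ => t₁.leaves + t₂.leaves

/-- The total number of nodes (proof lines) of the tree. -/
def size : PTree → ℕ
  | .leaf _ => 1
  | .node _ t₁ t₂ => t₁.size + t₂.size + 1

/-- The list of all labels occurring in the tree. -/
def labels : PTree → List PDnf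
  | .leaf D => [D]
  | .node D t₁ t₂ => D :: (t₁.labels ++ t₂.labels)

/-- Structural validity of a tree-like Res derivation from the set `H` of
hypothesis DNFs: every leaf is a hypothesis or an axiom
`(l₁∧…∧l_s) ∨ ¬l₁ ∨ … ∨ ¬l_s` (with `s ≥ 1`), and every internal node with
children `A ∨ (l₁∧…∧l_s)` and `B ∨ ¬l₁ ∨ … ∨ ¬l_s` is labelled by the
cut `A ∨ B`. -/
def okStruct (H : Finset PDnf) : PTree → Prop
  | .leaf D => D ∈ H ∨ ∃ T : PTerm, T.Nonempty ∧ D = insert T T.negLits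
  | .node D t₁ t₂ => t₁.okStruct H ∧ t₂.okStruct H ∧
      ∃ (T : PTerm) (A B : PDnf), T.Nonempty ∧
        t₁.concl = insert T A ∧ t₂.concl = B ∪ T.negLits ∧ D = A ∪ B

/-- A valid tree-like Res(l) derivation from the hypotheses `H`: it is
structurally valid and every proof line is an `l`-DNF. -/
def valid (H : Finset PDnf) (l : ℕ) (t : PTree) : Prop :=
  t.okStruct H ∧ ∀ D ∈ t.labels, IsLDnf l D

/-- The number of leaves labelled by an axiom rather than by a hypothesis. -/
def axLeafCount (H : Finset PDnf) : PTree → ℕ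
  | .leaf D => if D ∈ H then 0 else 1
  | .node _ t₁ t₂ => t₁.axLeafCount H + t₂.axLeafCount H

end PTree

/-- The set of hypothesis DNFs associated to a CNF: each clause read as a DNF
of singleton terms. -/
def PCnf.toHyps (F : PCnf) : Finset PDnf := F.image PClause.toDnf

/-- `t` is a tree-like Res(l) refutation of the CNF `F`: a valid tree-like
Res(l) derivation from the clauses of `F` whose root is the empty DNF. -/
def TreeResRefutation (F : PCnf) (l : ℕ) (t : PTree) : Prop :=
  t.valid F.toHyps l ∧ t.concl = ∅

/-- Resolution inference: the clause `C` is obtained from two clauses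
`A ∨ x` and `B ∨ ¬x` occurring in `prev` by the resolution rule, yielding `A ∨ B`. -/
def ResStep (prev : List PClause) (C : PClause) : Prop :=
  ∃ A ∈ prev, ∃ B ∈ prev, ∃ x : PVar,
    (x, true) ∈ A ∧ (x, false) ∈ B ∧
    C = A.erase (x, true) ∪ B.erase (x, false)

/-- `π` is a resolution derivation from the CNF `F`: every clause of `π`
belongs to `F` or follows from two earlier clauses by the resolution rule. -/
def IsResDeriv (F : PCnf) (π : List PClause) : Prop :=
  ∀ i : Fin π.length, π.get i ∈ F ∨ ResStep (π.take i) (π.get i)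

/-- `π` is a resolution derivation of the clause `C` from the CNF `F`
(its last clause is `C`); a refutation when `C = ∅`. Its size is `π.length`
and its width is the maximum cardinality of a clause in `π`. -/
def ResDerivOf (F : PCnf) (C : PClause) (π : List PClause) : Prop :=
  IsResDeriv F π ∧ π.getLast? = some C

/-- A partial assignment: maps some variables to truth values. -/
abbrev PAssign := PVar → Option Bool

/-- The restriction `F|ρ`: delete every clause containing a literal satisfied
by `ρ`, and delete from the remaining clauses every literal falsified by `ρ`. -/
def PCnf.restrict (F : PCnf) (ρ : PAssign) : PCnf :=
  (F.filter (fun C => ∀ m ∈ C, ρ m.1 ≠ some m.2)).image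
    (fun C => C.filter (fun m => ρ m.1 ≠ some (!m.2)))

section Aux

lemma PLit.neg_neg (m : PLit) : m.neg.neg = m := by
  cases m; simp [PLit.neg]

lemma negTerm_negLits (C : PClause) : C.negTerm.negLits = C.toDnf := by
  ext T
  simp only [PClause.negTerm, PTerm.negLits, PClause.toDnf, Finset.mem_image]
  constructor
  · rintro ⟨m, ⟨a, ha, rfl⟩, rfl⟩; exact ⟨a, ha, by rw [PLit.neg_neg]⟩
  · rintro ⟨a, ha, rfl⟩; exact ⟨a.neg, ⟨a, ha, rfl⟩, by rw [PLit.neg_neg]⟩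

lemma negTerm_card (C : PClause) : C.negTerm.card ≤ C.card :=
  Finset.card_image_le

lemma toDnf_insert (m : PLit) (C : PClause) :
    PClause.toDnf (insert m C) = insert ({m} : PTerm) C.toDnf := by
  simp [PClause.toDnf, Finset.image_insert]

lemma toDnf_union (C₁ C₂ : PClause) :
    PClause.toDnf (C₁ ∪ C₂) = C₁.toDnf ∪ C₂.toDnf := by
  simp [PClause.toDnf, Finset.image_union]

lemma toDnf_split {m : PLit} {C : PClause} (h : m ∈ C) :
    C.toDnf = insert ({m} : PTerm) (PClause.toDnf (C.erase m)) := by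
  rw [← toDnf_insert, Finset.insert_erase h]

lemma isLDnf_ax (w : ℕ) (C : PClause) (h : C.card ≤ w) (hw1 : 1 ≤ w) :
    IsLDnf w (insert C.negTerm C.toDnf) := by
  intro T hT
  rcases Finset.mem_insert.mp hT with rfl | hT
  · exact le_trans (negTerm_card C) h
  · obtain ⟨m, _, rfl⟩ := Finset.mem_image.mp hT
    simpa using hw1

lemma concl_mem_labels (t : PTree) : t.concl ∈ t.labels := by
  cases t <;> simp [PTree.concl, PTree.labels]

/-- the 3-node inner tree cutting the two axiom leaves on `x`. -/
lemma inner_tree (H : Finset PDnf) (w : ℕ) (C1 C2 : PClause) (x : PVar)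
    (hx1 : (x, true) ∈ C1) (hx2 : (x, false) ∈ C2)
    (h1 : C1.card ≤ w) (h2 : C2.card ≤ w) :
    ∃ tr : PTree, tr.valid H w ∧
      tr.concl = insert C1.negTerm (insert C2.negTerm
        (PClause.toDnf (C1.erase (x, true) ∪ C2.erase (x, false)))) ∧ tr.size = 3 := by
  have hw1 : 1 ≤ w := le_trans (Finset.card_pos.mpr ⟨_, hx1⟩) h1
  set R : PDnf := insert C1.negTerm (insert C2.negTerm
      (PClause.toDnf (C1.erase (x, true) ∪ C2.erase (x, false)))) with hR
  refine ⟨.node R (.leaf (insert C1.negTerm C1.negTerm.negLits))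
      (.leaf (insert C2.negTerm C2.negTerm.negLits)), ⟨?_, ?_⟩, rfl, rfl⟩
  · refine ⟨Or.inr ⟨C1.negTerm, ?_, rfl⟩, Or.inr ⟨C2.negTerm, ?_, rfl⟩,
      ({(x, true)} : PTerm),
      insert C1.negTerm (PClause.toDnf (C1.erase (x, true))),
      insert C2.negTerm (PClause.toDnf (C2.erase (x, false))), ?_, ?_, ?_, ?_⟩
    · exact Finset.Nonempty.image ⟨_, hx1⟩ _
    · exact Finset.Nonempty.image ⟨_, hx2⟩ _
    · exact Finset.singleton_nonempty _
    · show insert C1.negTerm C1.negTerm.negLits = _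
      rw [negTerm_negLits, toDnf_split hx1, Finset.insert_comm]
    · show insert C2.negTerm C2.negTerm.negLits = _
      rw [negTerm_negLits, toDnf_split hx2]
      have hneg : (({(x, true)} : PTerm)).negLits = {({(x, false)} : PTerm)} := by
        simp [PTerm.negLits, PLit.neg]
      rw [hneg]
      ext U
      simp only [Finset.mem_insert, Finset.mem_union, Finset.mem_singleton]
      tauto
    · rw [hR, toDnf_union, Finset.insert_union, Finset.union_insert]
  · intro D hD
    simp only [PTree.labels, List.mem_cons, List.mem_append, List.mem_singleton] at hD
    rcases hD with rfl | hD
    · intro T hT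
      rcases Finset.mem_insert.mp hT with rfl | hT
      · exact le_trans (negTerm_card C1) h1
      rcases Finset.mem_insert.mp hT with rfl | hT
      · exact le_trans (negTerm_card C2) h2
      · obtain ⟨m, _, rfl⟩ := Finset.mem_image.mp hT
        simpa using hw1
    · rcases hD with hD | hD <;> rcases hD with rfl | hD <;>
        first
          | (rw [negTerm_negLits]; exact isLDnf_ax w _ (by assumption) hw1)
          | simp_all [PTree.labels]

end Aux
section Elim

lemma elim_step (w : ℕ) (F : PCnf) (π : List PClause)
    (hπ : IsResDeriv F π) (hw : ∀ C ∈ π, C.card ≤ w)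
    (t : ℕ) (ht : t < π.length) (E' : PDnf) (n : ℕ)
    (hE' : E' ⊆ ((π.take t).map PClause.negTerm).toFinset)
    (hE'w : IsLDnf w E')
    (htr : (π.get ⟨t, ht⟩) ≠ ∅ → ∃ tr : PTree, tr.valid F.toHyps w ∧
        tr.concl = insert (π.get ⟨t, ht⟩).negTerm E' ∧ tr.size ≤ n) :
    ∃ E : PDnf, E ⊆ ((π.take t).map PClause.negTerm).toFinset ∧
      ∃ tr : PTree, tr.valid F.toHyps w ∧ tr.concl = E ∧ tr.size ≤ n + 4 := by
  set D : PClause := π.get ⟨t, ht⟩ with hD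
  rcases hπ ⟨t, ht⟩ with hF | hres
  · -- D ∈ F
    by_cases hD0 : D = ∅
    · refine ⟨∅, Finset.empty_subset _, .leaf ∅, ⟨Or.inl ?_, ?_⟩, rfl, by simp [PTree.size]⟩
      · refine Finset.mem_image.mpr ⟨∅, hD0 ▸ hF, ?_⟩
        simp [PClause.toDnf]
      · intro X hX
        simp only [PTree.labels, List.mem_singleton] at hX
        subst hX; intro T hT; exact absurd hT (Finset.notMem_empty T)
    · obtain ⟨tr, ⟨trok, trw⟩, trc, trs⟩ := htr hD0
      have hDne : D.Nonempty := Finset.nonempty_iff_ne_empty.mpr hD0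
      have hw1 : 1 ≤ w := le_trans (Finset.card_pos.mpr hDne) (hw D (by rw [hD]; exact List.get_mem π ⟨t, ht⟩))
      refine ⟨E', hE', .node E' tr (.leaf D.toDnf), ⟨⟨trok, Or.inl ?_, ?_⟩, ?_⟩, rfl, ?_⟩
      · exact Finset.mem_image_of_mem _ hF
      · refine ⟨D.negTerm, E', ∅, Finset.Nonempty.image hDne _, trc, ?_, (Finset.union_empty E').symm⟩
        show D.toDnf = ∅ ∪ D.negTerm.negLits
        rw [negTerm_negLits, Finset.empty_union]
      · intro X hX
        simp [PTree.labels] at hX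
        rcases hX with rfl | hX | rfl
        · exact hE'w
        · exact trw _ hX
        · intro T hT
          obtain ⟨m, _, rfl⟩ := Finset.mem_image.mp hT
          simpa using hw1
      · show tr.size + 1 + 1 ≤ n + 4
        omega
  · -- resolution step
    obtain ⟨C1, hC1, C2, hC2, x, hx1, hx2, hDeq⟩ := hres
    have hC1π : C1 ∈ π := (List.take_sublist t π).subset hC1
    have hC2π : C2 ∈ π := (List.take_sublist t π).subset hC2
    have hC1m : C1.negTerm ∈ ((π.take t).map PClause.negTerm).toFinset :=
      List.mem_toFinset.mpr (List.mem_map_of_mem (f := PClause.negTerm) hC1)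
    have hC2m : C2.negTerm ∈ ((π.take t).map PClause.negTerm).toFinset :=
      List.mem_toFinset.mpr (List.mem_map_of_mem (f := PClause.negTerm) hC2)
    obtain ⟨tri, triv, tric, tris⟩ :=
      inner_tree F.toHyps w C1 C2 x hx1 hx2 (hw _ hC1π) (hw _ hC2π)
    by_cases hD0 : D = ∅
    · -- the resolved clause is empty: inner tree alone suffices
      refine ⟨insert C1.negTerm {C2.negTerm}, ?_, tri, triv, ?_, by omega⟩
      · intro a ha
        rcases Finset.mem_insert.mp ha with rfl | ha
        · exact hC1m
        · rw [Finset.mem_singleton.mp ha]; exact hC2m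
      · rw [tric, ← hDeq, ← hD, hD0]
        simp [PClause.toDnf]
    · obtain ⟨tr, ⟨trok, trw⟩, trc, trs⟩ := htr hD0
      have hDne : D.Nonempty := Finset.nonempty_iff_ne_empty.mpr hD0
      refine ⟨E' ∪ insert C1.negTerm {C2.negTerm}, ?_,
        .node (E' ∪ insert C1.negTerm {C2.negTerm}) tr tri, ⟨⟨trok, triv.1, ?_⟩, ?_⟩, rfl, ?_⟩
      · intro a ha
        rcases Finset.mem_union.mp ha with ha | ha
        · exact hE' ha
        rcases Finset.mem_insert.mp ha with rfl | ha
        · exact hC1m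
        · rw [Finset.mem_singleton.mp ha]; exact hC2m
      · refine ⟨D.negTerm, E', insert C1.negTerm {C2.negTerm},
          Finset.Nonempty.image hDne _, trc, ?_, rfl⟩
        rw [tric, negTerm_negLits, hD, hDeq]
        ext U
        simp only [Finset.mem_insert, Finset.mem_union, Finset.mem_singleton]
        tauto
      · intro X hX
        simp only [PTree.labels, List.mem_cons, List.mem_append] at hX
        rcases hX with rfl | hX | hX
        · intro T hT
          rcases Finset.mem_union.mp hT with hT | hT
          · exact hE'w _ hT
          rcases Finset.mem_insert.mp hT with rfl | hT
          · exact le_trans (negTerm_card C1) (hw _ hC1π)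
          · rw [Finset.mem_singleton.mp hT]
            exact le_trans (negTerm_card C2) (hw _ hC2π)
        · exact trw _ hX
        · exact triv.2 _ hX
      · show tr.size + tri.size + 1 ≤ n + 4
        omega

end Elim
lemma main_ind (w : ℕ) (F : PCnf) (π : List PClause)
    (hπ : IsResDeriv F π) (hlast : π.getLast? = some ∅)
    (hw : ∀ C ∈ π, C.card ≤ w) :
    ∀ d t, 1 ≤ d → t + d = π.length →
    ∃ E : PDnf, E ⊆ ((π.take t).map PClause.negTerm).toFinset ∧
      ∃ tr : PTree, tr.valid F.toHyps w ∧ tr.concl = E ∧ tr.size ≤ 4 * d := by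
  intro d
  induction d with
  | zero => intro t h; omega
  | succ d ih =>
    intro t _ hts
    have ht : t < π.length := by omega
    rcases Nat.eq_zero_or_pos d with rfl | hd
    · -- base case: t = π.length - 1, the last clause is ∅
      have hget : π.get ⟨t, ht⟩ = ∅ := by
        have hne : π ≠ [] := by intro h; rw [h] at hlast; simp at hlast
        rw [List.getLast?_eq_getLast hne] at hlast
        have h2 : π.getLast hne = π.get ⟨π.length - 1, by omega⟩ := List.getLast_eq_getElem hne
        have htt : t = π.length - 1 := by omega
        subst htt
        rw [← h2]
        exact Option.some.inj hlast
      obtain ⟨E, hE, tr, h1, h2, h3⟩ := elim_step w F π hπ hw t ht ∅ 0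
        (Finset.empty_subset _) (fun T hT => absurd hT (Finset.notMem_empty T))
        (fun hne => absurd hget hne)
      exact ⟨E, hE, tr, h1, h2, by omega⟩
    · obtain ⟨E, hE, tr, trv, trc, trs⟩ := ih (t + 1) hd (by omega)
      have hsplit : ((π.take (t + 1)).map PClause.negTerm).toFinset
          = insert (π.get ⟨t, ht⟩).negTerm ((π.take t).map PClause.negTerm).toFinset := by
        have hstep : π.take (t + 1) = π.take t ++ [π.get ⟨t, ht⟩] := by
          rw [List.take_succ, List.getElem?_eq_getElem ht]; rfl
        rw [hstep, List.map_append, List.toFinset_append]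
        ext a
        simp [or_comm]
      by_cases hmem : (π.get ⟨t, ht⟩).negTerm ∈ E
      · have hEw : IsLDnf w E := trv.2 E (trc ▸ concl_mem_labels tr)
        obtain ⟨E2, hE2, tr2, h1, h2, h3⟩ := elim_step w F π hπ hw t ht
          (E.erase (π.get ⟨t, ht⟩).negTerm) (4 * d)
          (fun a ha => by
            have hmem2 := hE (Finset.mem_of_mem_erase ha)
            rw [hsplit] at hmem2
            rcases Finset.mem_insert.mp hmem2 with h | h
            · exact absurd h (Finset.ne_of_mem_erase ha)
            · exact h)
          (fun T hT => hEw T (Finset.mem_of_mem_erase hT))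
          (fun _ => ⟨tr, trv, by rw [trc, Finset.insert_erase hmem], trs⟩)
        exact ⟨E2, hE2, tr2, h1, h2, by omega⟩
      · refine ⟨E, fun a ha => ?_, tr, trv, trc, by omega⟩
        have hmem2 := hE ha
        rw [hsplit] at hmem2
        rcases Finset.mem_insert.mp hmem2 with h | h
        · exact absurd (h ▸ ha) hmem
        · exact h
/-- Let `D₁, …, D_S` be a resolution refutation of `F` of width `w`, and
let `E'_t = ⋁_{i=1}^t ¬Dᵢ`.  Then for every `0 ≤ t ≤ S-1` there is a `w`-DNF `E_t` whose
terms form a subset of the terms of `E'_t`, with a tree-like Res(w) derivation from `F`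
with at most `5(S-t)` nodes; in particular (`t = 0`) `F` has a tree-like Res(w) refutation
with at most `5S` nodes. -/
theorem intermediate_dnf_derivations
    (w S : ℕ) (F : PCnf) (π : List PClause)
    (hπ : ResDerivOf F ∅ π) (hw : ∀ C ∈ π, C.card ≤ w) (hS : π.length = S) :
    (∀ t : ℕ, t ≤ S - 1 →
      ∃ E : PDnf, E ⊆ ((π.take t).map PClause.negTerm).toFinset ∧
        ∃ tr : PTree, tr.valid F.toHyps w ∧ tr.concl = E ∧ tr.size ≤ 5 * (S - t)) ∧
    (∃ tr : PTree, TreeResRefutation F w tr ∧ tr.size ≤ 5 * S) := by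
  obtain ⟨hderiv, hlast⟩ := hπ
  have hlen : 1 ≤ π.length := by
    cases π with
    | nil => simp at hlast
    | cons a l => simp
  subst hS
  have key : ∀ t, t ≤ π.length - 1 →
      ∃ E : PDnf, E ⊆ ((π.take t).map PClause.negTerm).toFinset ∧
        ∃ tr : PTree, tr.valid F.toHyps w ∧ tr.concl = E ∧
          tr.size ≤ 5 * (π.length - t) := by
    intro t htle
    obtain ⟨E, hE, tr, trv, trc, trs⟩ :=
      main_ind w F π hderiv hlast hw (π.length - t) t (by omega) (by omega)
    exact ⟨E, hE, tr, trv, trc, by omega⟩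
  refine ⟨key, ?_⟩
  obtain ⟨E, hE, tr, trv, trc, trs⟩ := key 0 (by omega)
  have hE0 : E = ∅ := Finset.subset_empty.mp (by simpa using hE)
  exact ⟨tr, ⟨trv, by rw [trc, hE0]⟩, by simpa using trs⟩
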